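/- The sequences b^{(k)} defined by b^{(k)}_n = 0 for n < k and b^{(k)}_n = 1 for n ≥ k form a Schauder basis of bv_p for 1 < p < ∞: every x ∈ bv_p has the unique representation x = Σ_k λ_k b^{(k)} with λ_k = x_k − x_{k−1} (x_{−1} := 0). -/

import Mathlib

open scoped ENNReal
open Real Set

/-- The tridiagonal operator U(s,r,s) acting on sequences, with x_{-1} = 0. -/
noncomputable def Ufun (s r : ℂ) (x : ℕ → ℂ) : ℕ → ℂ :=
  fun k => (if k = 0 then 0 else s * x (k - 1)) + r * x k + s * x (k + 1)

/-- The backward difference (Δ x)_k = x_k − x_{k−1}, with x_{-1} = 0. -/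
noncomputable def dL (x : ℕ → ℂ) : ℕ → ℂ :=
  fun k => x k - (if k = 0 then 0 else x (k - 1))

lemma dL_sub_fun (f g : ℕ → ℂ) (n : ℕ) :
    dL (fun m => f m - g m) n = dL f n - dL g n := by
  simp only [dL]; split_ifs <;> ring

lemma dL_sum (s : Finset ℕ) (f : ℕ → ℕ → ℂ) (n : ℕ) :
    dL (fun m => ∑ k ∈ s, f k m) n = ∑ k ∈ s, dL (f k) n := by
  simp only [dL]; split_ifs <;> simp [Finset.sum_sub_distrib]

lemma dL_smul (c : ℂ) (f : ℕ → ℂ) (n : ℕ) :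
    dL (fun m => c * f m) n = c * dL f n := by
  simp only [dL]; split_ifs <;> ring

lemma dL_b (b : ℕ → ℕ → ℂ) (hb : ∀ k n, b k n = if n < k then 0 else 1) (k n : ℕ) :
    dL (b k) n = if n = k then 1 else 0 := by
  simp only [dL, hb]
  split_ifs <;> first | (exfalso; omega) | ring

lemma dL_master (b : ℕ → ℕ → ℂ) (hb : ∀ k n, b k n = if n < k then 0 else 1)
    (x c : ℕ → ℂ) (N n : ℕ) :
    dL (fun m => x m - ∑ k ∈ Finset.range N, c k * b k m) n
      = dL x n - (if n < N then c n else 0) := by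
  rw [dL_sub_fun, dL_sum]
  congr 1
  have : ∀ k ∈ Finset.range N, dL (fun m => c k * b k m) n
      = if k = n then c k else 0 := by
    intro k _
    rw [dL_smul, dL_b b hb]
    rcases eq_or_ne k n with h | h
    · subst h; simp
    · simp [h, Ne.symm h]
  rw [Finset.sum_congr rfl this, Finset.sum_ite_eq' (Finset.range N) n c]
  simp [Finset.mem_range]

/-- The sequences b^{(k)} (0 before index k, 1 from k on) form a Schauder basis
of bv_p: with λ_k = x_k − x_{k−1}, the partial sums of Σ λ_k b^{(k)} converge
to x in the bv_p norm, and the representation is unique. -/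
theorem stmt15 (p : ℝ≥0∞) (hp : 1 < p) (hp' : p ≠ ∞)
    (b : ℕ → ℕ → ℂ) (hb : ∀ k n, b k n = if n < k then 0 else 1)
    (x : ℕ → ℂ) (hx : Memℓp (dL x) p) :
    Filter.Tendsto
      (fun N => (∑' n, ‖dL (fun m => x m -
          ∑ k ∈ Finset.range N, dL x k * b k m) n‖ ^ p.toReal) ^ (1 / p.toReal))
      Filter.atTop (nhds 0) ∧
    ∀ c : ℕ → ℂ,
      Filter.Tendsto
        (fun N => (∑' n, ‖dL (fun m => x m -
            ∑ k ∈ Finset.range N, c k * b k m) n‖ ^ p.toReal) ^ (1 / p.toReal))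
        Filter.atTop (nhds 0) →
      ∀ k, c k = dL x k := by
  set q := p.toReal with hqdef
  have hq : 0 < q := ENNReal.toReal_pos (by positivity) hp'
  set g : ℕ → ℝ := fun n => ‖dL x n‖ ^ q with hg
  have hgs : Summable g := hx.summable hq
  have hgnn : ∀ n, 0 ≤ g n := fun n => Real.rpow_nonneg (norm_nonneg _) q
  constructor
  · have key : ∀ N : ℕ, (∑' n, ‖dL (fun m => x m -
        ∑ k ∈ Finset.range N, dL x k * b k m) n‖ ^ q)
        = (∑' n, g n) - ∑ n ∈ Finset.range N, g n := by
      intro N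
      have h1 : ∀ n, ‖dL (fun m => x m -
          ∑ k ∈ Finset.range N, dL x k * b k m) n‖ ^ q
          = g n - (if n < N then g n else 0) := by
        intro n
        rw [dL_master b hb]
        split_ifs with h
        · simp [Real.zero_rpow hq.ne']
        · simp only [sub_zero]; rfl
      have h2 : Summable (fun n => if n < N then g n else 0) :=
        summable_of_ne_finset_zero (s := Finset.range N)
          (fun n hn => by simp [Finset.mem_range.not.1 hn])
      have h3 : (∑' n, (if n < N then g n else 0)) = ∑ n ∈ Finset.range N, g n := by
        rw [tsum_eq_sum (s := Finset.range N)
          (fun n hn => by simp [Finset.mem_range.not.1 hn])]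
        exact Finset.sum_congr rfl fun n hn => by simp [Finset.mem_range.1 hn]
      calc (∑' n, ‖dL (fun m => x m -
            ∑ k ∈ Finset.range N, dL x k * b k m) n‖ ^ q)
          = ∑' n, (g n - (if n < N then g n else 0)) := by
            exact tsum_congr h1
        _ = (∑' n, g n) - ∑' n, (if n < N then g n else 0) := Summable.tsum_sub hgs h2
        _ = (∑' n, g n) - ∑ n ∈ Finset.range N, g n := by rw [h3]
    simp only [key]
    have : Filter.Tendsto (fun N => (∑' n, g n) - ∑ n ∈ Finset.range N, g n)
        Filter.atTop (nhds 0) := by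
      have := hgs.hasSum.tendsto_sum_nat
      have h := Filter.Tendsto.const_sub (∑' n, g n) this
      simpa using h
    have := this.rpow_const (p := 1 / q) (Or.inr (by positivity))
    simpa [Real.zero_rpow (inv_ne_zero hq.ne'), one_div] using this
  · intro c hc k
    have hbound : ∀ N, k < N → ‖dL x k - c k‖ ≤
        (∑' n, ‖dL (fun m => x m -
          ∑ k ∈ Finset.range N, c k * b k m) n‖ ^ q) ^ (1 / q) := by
      intro N hN
      set h : ℕ → ℝ := fun n => ‖dL x n - (if n < N then c n else 0)‖ ^ q with hh
      have heq : ∀ n, ‖dL (fun m => x m -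
          ∑ k ∈ Finset.range N, c k * b k m) n‖ ^ q = h n := by
        intro n; rw [dL_master b hb]
      have hsum : Summable h := by
        refine (summable_nat_add_iff N).1 ?_
        refine ((summable_nat_add_iff N).2 hgs).congr fun n => ?_
        simp [hh, hg, Nat.not_lt.2 (Nat.le_add_left N n)]
      have hterm : h k = ‖dL x k - c k‖ ^ q := by simp [hh, hN]
      have hle : ‖dL x k - c k‖ ^ q ≤ ∑' n, h n := by
        rw [← hterm]; exact Summable.le_tsum hsum k fun n _ => Real.rpow_nonneg (norm_nonneg _) q
      calc ‖dL x k - c k‖ = (‖dL x k - c k‖ ^ q) ^ (1 / q) := by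
            rw [← Real.rpow_mul (norm_nonneg _), mul_one_div, div_self hq.ne', Real.rpow_one]
        _ ≤ (∑' n, h n) ^ (1 / q) :=
            Real.rpow_le_rpow (Real.rpow_nonneg (norm_nonneg _) q) hle (by positivity)
        _ = _ := by rw [tsum_congr heq]
    have : ‖dL x k - c k‖ ≤ 0 := by
      refine ge_of_tendsto hc ?_
      filter_upwards [Filter.eventually_gt_atTop k] with N hN
      exact hbound N hN
    have h0 : dL x k = c k := by
      have := le_antisymm this (norm_nonneg _)
      simpa [sub_eq_zero] using this
    exact h0.symm
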